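/- The commutator f ↦ (1/m₁^f(·))·(i A_{m₁^f} f) − i A_{m₁^f}((1/m₁^f(·))·f), where (1/m₁^f(·)) denotes multiplication by e^{−n}, is defined on finitely supported functions on ℕ and extends to a compact operator on ℓ²(ℕ, m₁^f). -/

import Mathlib

noncomputable section

open Complex

/-- `(A_ℕ f)(n) = (i/2)·((n − 1/2)·f(n−1) − (n + 1/2)·f(n+1))`, with `f(−1) = 0`. -/
def aN (f : ℕ → ℂ) : ℕ → ℂ := fun n =>
  (I / 2) * (((n : ℂ) - 1 / 2) * (if n = 0 then 0 else f (n - 1))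
    - ((n : ℂ) + 1 / 2) * f (n + 1))

/-- The gauge transform `T_{m→m'} f = (x ↦ √(m(x)/m'(x))·f(x))`. -/
def Tw {V : Type*} (m m' : V → ℝ) (f : V → ℂ) : V → ℂ :=
  fun x => (Real.sqrt (m x / m' x) : ℂ) * f x

/-- Weight of the funnel half-line: `m₁^f(n) = eⁿ`. -/
def m1F : ℕ → ℝ := fun n => Real.exp n

/-- `A_{m₁^f} := T_{1→m₁^f} ∘ A_ℕ ∘ T_{1→m₁^f}⁻¹`. -/
def aM1F (f : ℕ → ℂ) : ℕ → ℂ :=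
  Tw (fun _ => 1) m1F (aN (Tw m1F (fun _ => 1) f))

/-- The commutator `[1/m₁^f(·), iA_{m₁^f}]` on finitely supported functions:
`f ↦ (1/m₁^f(·))·(iA_{m₁^f} f) − iA_{m₁^f}((1/m₁^f(·))·f)`. -/
def commOp (f : ℕ → ℂ) : ℕ → ℂ := fun n =>
  ((Real.exp (-(n : ℝ)) : ℝ) : ℂ) * (I * aM1F f n)
    - I * aM1F (fun k => ((Real.exp (-(k : ℝ)) : ℝ) : ℂ) * f k) n

/-- The standard (unweighted) `ℓ²` space over `V`. -/
abbrev L2 (V : Type*) := lp (fun _ : V => ℂ) 2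

/-- The isometry `ℓ²(V,m) → ℓ²(V)`, `f ↦ √m·f`. -/
def emb {V : Type*} (m : V → ℝ) (f : V → ℂ) : V → ℂ :=
  fun v => (Real.sqrt (m v) : ℂ) * f v

/-- The inverse isometry `ℓ²(V) → ℓ²(V,m)`, `g ↦ g/√m`. -/
def unemb {V : Type*} (m : V → ℝ) (g : V → ℂ) : V → ℂ :=
  fun v => g v / (Real.sqrt (m v) : ℂ)

lemma rpow_two' (x : ℝ) : x ^ ((2:ENNReal)).toReal = x ^ 2 := by
  rw [show ((2:ENNReal)).toReal = ((2:ℕ):ℝ) by simp, Real.rpow_natCast]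
lemma norm_apply_le (g : L2 ℕ) (i : ℕ) : ‖(g : ℕ → ℂ) i‖ ≤ ‖g‖ :=
  lp.norm_apply_le_norm (by norm_num) g i

lemma memlp_op {c : ℕ → ℂ} (hc : Summable fun n => ‖c n‖ ^ 2) (k : ℕ → ℕ) (u : L2 ℕ) :
    Memℓp (fun n => c n * (u : ℕ → ℂ) (k n)) 2 := by
  apply memℓp_gen
  simp only [rpow_two']
  have hb : ∀ n, ‖c n * (u : ℕ → ℂ) (k n)‖ ^ 2 ≤ ‖c n‖ ^ 2 * ‖u‖ ^ 2 := by
    intro n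
    rw [norm_mul, mul_pow]
    exact mul_le_mul_of_nonneg_left (pow_le_pow_left₀ (norm_nonneg _) (norm_apply_le u _) 2)
      (by positivity)
  exact Summable.of_nonneg_of_le (fun n => by positivity) hb (hc.mul_right _)

/-- norm bound for the candidate -/
lemma op_norm_aux {c : ℕ → ℂ} (hc : Summable fun n => ‖c n‖ ^ 2) (k : ℕ → ℕ) (u : L2 ℕ)
    (h : Memℓp (fun n => c n * (u : ℕ → ℂ) (k n)) 2) :
    ‖(⟨_, h⟩ : L2 ℕ)‖ ≤ Real.sqrt (∑' n, ‖c n‖ ^ 2) * ‖u‖ := by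
  have hS : 0 ≤ ∑' n, ‖c n‖ ^ 2 := tsum_nonneg fun n => by positivity
  refine lp.norm_le_of_forall_sum_le (by simp) (by positivity) fun s => ?_
  simp only [rpow_two']
  have h1 : ∀ n ∈ s, ‖c n * (u : ℕ → ℂ) (k n)‖ ^ 2 ≤ ‖c n‖ ^ 2 * ‖u‖ ^ 2 := by
    intro n _
    rw [norm_mul, mul_pow]
    exact mul_le_mul_of_nonneg_left (pow_le_pow_left₀ (norm_nonneg _) (norm_apply_le u _) 2)
      (by positivity)
  calc ∑ n ∈ s, ‖c n * (u : ℕ → ℂ) (k n)‖ ^ 2 ≤ ∑ n ∈ s, ‖c n‖ ^ 2 * ‖u‖ ^ 2 :=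
        Finset.sum_le_sum h1
    _ = (∑ n ∈ s, ‖c n‖ ^ 2) * ‖u‖ ^ 2 := by rw [Finset.sum_mul]
    _ ≤ (∑' n, ‖c n‖ ^ 2) * ‖u‖ ^ 2 :=
        mul_le_mul_of_nonneg_right (Summable.sum_le_tsum s (fun n _ => by positivity) hc) (by positivity)
    _ = (Real.sqrt (∑' n, ‖c n‖ ^ 2) * ‖u‖) ^ 2 := by
        rw [mul_pow, Real.sq_sqrt hS]

/-- the operator -/
def opL (c : ℕ → ℂ) (k : ℕ → ℕ) (hc : Summable fun n => ‖c n‖ ^ 2) : L2 ℕ →L[ℂ] L2 ℕ :=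
  LinearMap.mkContinuous
    { toFun := fun u => (⟨fun n => c n * (u : ℕ → ℂ) (k n), memlp_op hc k u⟩ : L2 ℕ)
      map_add' := by
        intro u v
        apply lp.ext
        funext n
        simp [lp.coeFn_add, mul_add]
        rfl
      map_smul' := by
        intro a u
        apply lp.ext
        funext n
        simp [lp.coeFn_smul]
        ring }
    (Real.sqrt (∑' n, ‖c n‖ ^ 2))
    (fun u => op_norm_aux hc k u _)

lemma opL_apply {c : ℕ → ℂ} {k : ℕ → ℕ} (hc : Summable fun n => ‖c n‖ ^ 2) (u : L2 ℕ) (n : ℕ) :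
    (opL c k hc u : ℕ → ℂ) n = c n * (u : ℕ → ℂ) (k n) := rfl

lemma opL_norm_le {c : ℕ → ℂ} {k : ℕ → ℕ} (hc : Summable fun n => ‖c n‖ ^ 2) :
    ‖opL c k hc‖ ≤ Real.sqrt (∑' n, ‖c n‖ ^ 2) :=
  LinearMap.mkContinuous_norm_le _ (Real.sqrt_nonneg _) _

lemma continuous_eval (i : ℕ) : Continuous (fun u : L2 ℕ => (u : ℕ → ℂ) i) := by
  have : LipschitzWith 1 (fun u : L2 ℕ => (u : ℕ → ℂ) i) := by
    apply LipschitzWith.mk_one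
    intro u v
    rw [dist_eq_norm, dist_eq_norm]
    have : u.1 i - v.1 i = ((u - v : L2 ℕ) : ℕ → ℂ) i := by simp [lp.coeFn_sub]
    calc ‖(u : ℕ → ℂ) i - (v : ℕ → ℂ) i‖ = ‖((u - v : L2 ℕ) : ℕ → ℂ) i‖ := by rw [this]
      _ ≤ ‖u - v‖ := norm_apply_le _ _
  exact this.continuous

lemma rankOne_compact {φ : L2 ℕ → ℂ} (hφ : Continuous φ) (hφ0 : φ 0 = 0) (v : L2 ℕ) :
    IsCompactOperator (fun u => φ u • v) := by
  refine ⟨(fun z : ℂ => z • v) '' Metric.closedBall 0 1,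
    ((isCompact_closedBall 0 1).image (by continuity)), ?_⟩
  have h1 : φ ⁻¹' Metric.closedBall 0 1 ∈ nhds (0 : L2 ℕ) := by
    apply hφ.continuousAt.preimage_mem_nhds
    rw [hφ0]
    exact Metric.closedBall_mem_nhds _ one_pos
  refine Filter.mem_of_superset h1 fun u hu => ?_
  exact ⟨φ u, hu, rfl⟩

lemma finsum_compact {ι : Type*} (s : Finset ι) (F : ι → (L2 ℕ → L2 ℕ))
    (hF : ∀ i ∈ s, IsCompactOperator (F i)) :
    IsCompactOperator (fun u => ∑ i ∈ s, F i u) := by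
  classical
  induction s using Finset.induction with
  | empty => simp only [Finset.sum_empty]; exact isCompactOperator_zero
  | insert _ _ hx ih =>
    rename_i a t
    simp only [Finset.sum_insert hx]
    exact (hF a (Finset.mem_insert_self a t)).add
      (ih fun i hi => hF i (Finset.mem_insert_of_mem hi))

lemma trunc_summable (c : ℕ → ℂ) (N : ℕ) :
    Summable fun n => ‖(if n < N then c n else 0 : ℂ)‖ ^ 2 := by
  apply summable_of_ne_finset_zero (s := Finset.range N)
  intro n hn
  have h := Finset.mem_range.not.mp hn
  simp [if_neg (by omega : ¬ n < N)]

lemma trunc_compact (c : ℕ → ℂ) (k : ℕ → ℕ) (N : ℕ) :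
    IsCompactOperator (opL (fun n => if n < N then c n else 0) k (trunc_summable c N)) := by
  have heq : ⇑(opL (fun n => if n < N then c n else 0) k (trunc_summable c N))
      = fun u : L2 ℕ =>
        ∑ n ∈ Finset.range N, (c n * (u : ℕ → ℂ) (k n)) • lp.single 2 n (1 : ℂ) := by
    funext u
    apply lp.ext
    funext j
    rw [opL_apply, lp.coeFn_sum]
    simp only [Finset.sum_apply, Pi.smul_apply, lp.coeFn_smul, lp.single_apply, smul_eq_mul]
    by_cases h : j < N
    · rw [if_pos h, Finset.sum_eq_single_of_mem j (Finset.mem_range.mpr h)]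
      · simp
      · intro n _ hnj
        rw [Pi.single_apply, if_neg (fun e => hnj e.symm), mul_zero]
    · rw [if_neg h, zero_mul, eq_comm]
      apply Finset.sum_eq_zero
      intro n hn
      rw [Pi.single_apply, if_neg (fun e : j = n => h (e ▸ Finset.mem_range.mp hn)), mul_zero]
  rw [heq]
  apply finsum_compact
  intro n _
  apply rankOne_compact (φ := fun u => c n * (u : ℕ → ℂ) (k n))
  · exact continuous_const.mul (continuous_eval _)
  · simp

lemma tail_summable {c : ℕ → ℂ} (hc : Summable fun n => ‖c n‖ ^ 2) (N : ℕ) :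
    Summable fun n => ‖(if n < N then 0 else c n : ℂ)‖ ^ 2 := by
  refine Summable.of_nonneg_of_le (fun n => by positivity) (fun n => ?_) hc
  split <;> simp [norm_nonneg] <;> positivity

lemma opL_compact (c : ℕ → ℂ) (k : ℕ → ℕ) (hc : Summable fun n => ‖c n‖ ^ 2) :
    IsCompactOperator (opL c k hc) := by
  have hdiff : ∀ N, opL c k hc - opL (fun n => if n < N then c n else 0) k (trunc_summable c N)
      = opL (fun n => if n < N then 0 else c n) k (tail_summable hc N) := by
    intro N
    apply ContinuousLinearMap.ext
    intro u
    apply lp.ext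
    funext n
    rw [ContinuousLinearMap.sub_apply, lp.coeFn_sub, Pi.sub_apply, opL_apply, opL_apply, opL_apply]
    split <;> ring
  have htail_tsum : ∀ N, (∑' n, ‖(if n < N then 0 else c n : ℂ)‖ ^ 2)
      = (∑' n, ‖c n‖ ^ 2) - ∑ n ∈ Finset.range N, ‖c n‖ ^ 2 := by
    intro N
    have h1 : (fun n => ‖(if n < N then 0 else c n : ℂ)‖ ^ 2)
        = fun n => ‖c n‖ ^ 2 - (if n < N then ‖c n‖ ^ 2 else 0) := by
      funext n; split <;> simp
    have hsum2 : Summable (fun n => if n < N then ‖c n‖ ^ 2 else 0) := by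
      apply summable_of_ne_finset_zero (s := Finset.range N)
      intro n hn
      have h' := Finset.mem_range.not.mp hn
      rw [if_neg (by omega)]
    rw [h1, Summable.tsum_sub hc hsum2]
    congr 1
    rw [tsum_eq_sum (s := Finset.range N) ?_]
    · apply Finset.sum_congr rfl
      intro n hn
      rw [if_pos (Finset.mem_range.mp hn)]
    · intro n hn
      have h' := Finset.mem_range.not.mp hn
      rw [if_neg (by omega)]
  have hεto : Filter.Tendsto
      (fun N => Real.sqrt ((∑' n, ‖c n‖ ^ 2) - ∑ n ∈ Finset.range N, ‖c n‖ ^ 2))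
      Filter.atTop (nhds 0) := by
    have h2 : Filter.Tendsto
        (fun N => (∑' n, ‖c n‖ ^ 2) - ∑ n ∈ Finset.range N, ‖c n‖ ^ 2)
        Filter.atTop (nhds 0) := by
      have h3 := (tendsto_const_nhds (x := ∑' n, ‖c n‖ ^ 2)
        (f := Filter.atTop (α := ℕ))).sub hc.hasSum.tendsto_sum_nat
      simpa using h3
    have h4 := (Real.continuous_sqrt.tendsto 0).comp h2
    simpa [Function.comp_def] using h4
  apply isCompactOperator_of_tendsto (F := fun N =>
    opL (fun n => if n < N then c n else 0) k (trunc_summable c N)) (l := Filter.atTop)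
  · rw [tendsto_iff_norm_sub_tendsto_zero]
    refine squeeze_zero (fun N => norm_nonneg _) (fun N => ?_) hεto
    rw [norm_sub_rev, hdiff N]
    calc ‖opL (fun n => if n < N then 0 else c n) k (tail_summable hc N)‖
        ≤ Real.sqrt (∑' n, ‖(if n < N then 0 else c n : ℂ)‖ ^ 2) := opL_norm_le _
      _ = Real.sqrt ((∑' n, ‖c n‖ ^ 2) - ∑ n ∈ Finset.range N, ‖c n‖ ^ 2) := by rw [htail_tsum N]
  · exact Filter.Eventually.of_forall fun N => trunc_compact c k N

lemma rhs_simp (g : ℕ → ℂ) (n : ℕ) :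
    emb m1F (commOp (unemb m1F g)) n
      = ((Real.exp (-(n:ℝ)) : ℝ) : ℂ) * (I * aN g n)
        - I * aN (fun k : ℕ => ((Real.exp (-(k:ℝ)) : ℝ) : ℂ) * g k) n := by
  have hE : ∀ k : ℕ, ((Real.sqrt (Real.exp k) : ℝ) : ℂ) ≠ 0 := by
    intro k
    simp [Real.sqrt_ne_zero', Real.exp_pos]
  have hG1 : Tw m1F (fun _ => 1) (unemb m1F g) = g := by
    funext k
    simp only [Tw, unemb, m1F, div_one]
    field_simp
  have hG2 : Tw m1F (fun _ => 1)
      (fun k : ℕ => ((Real.exp (-(k:ℝ)) : ℝ) : ℂ) * unemb m1F g k)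
      = fun k : ℕ => ((Real.exp (-(k:ℝ)) : ℝ) : ℂ) * g k := by
    funext k
    simp only [Tw, unemb, m1F, div_one]
    field_simp
  simp only [emb, commOp, aM1F, hG1, hG2, Tw, m1F, one_div, Real.sqrt_inv]
  push_cast
  field_simp

def alph : ℕ → ℂ := fun n => if n = 0 then 0 else
  (1/2 : ℂ) * ((n:ℂ) - 1/2) * (((Real.exp (1 - (n:ℝ)) : ℝ) : ℂ) - ((Real.exp (-(n:ℝ)) : ℝ) : ℂ))
def bet : ℕ → ℂ := fun n =>
  (1/2 : ℂ) * ((n:ℂ) + 1/2) * (((Real.exp (-(n:ℝ)) : ℝ) : ℂ) - ((Real.exp (-(n:ℝ) - 1) : ℝ) : ℂ))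

lemma key (g : ℕ → ℂ) (n : ℕ) :
    alph n * g (n - 1) + bet n * g (n + 1) = emb m1F (commOp (unemb m1F g)) n := by
  rw [rhs_simp]
  have hI : (I : ℂ) * I = -1 := Complex.I_mul_I
  cases n with
  | zero =>
    simp only [alph, bet, aN, if_pos rfl, Nat.cast_zero]
    norm_num
    ring_nf
    simp only [Complex.I_sq]
    ring
  | succ m =>
    have e1 : Real.exp (1 - ((m+1 : ℕ):ℝ)) = Real.exp (-(m:ℝ)) := by
      congr 1; push_cast; ring
    have e2 : Real.exp (-((m+1:ℕ):ℝ) - 1) = Real.exp (-((m+1+1:ℕ):ℝ)) := by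
      congr 1; push_cast; ring
    have e3 : (((m+1:ℕ) - 1 : ℕ) : ℝ) = (m:ℝ) := by push_cast [Nat.add_sub_cancel]; ring
    simp only [alph, bet, aN, if_neg (Nat.succ_ne_zero m), Nat.add_sub_cancel, e1, e2, e3]
    push_cast
    ring_nf
    simp only [Complex.I_sq]
    ring

lemma exp_neg_nat (n : ℕ) : Real.exp (-(n:ℝ)) = Real.exp (-1) ^ n := by
  rw [← Real.exp_nat_mul]
  norm_num

lemma norm_coeff_n (n : ℕ) : ‖(n:ℂ) - 1/2‖ ≤ (n:ℝ) + 1 ∧ ‖(n:ℂ) + 1/2‖ ≤ (n:ℝ) + 1 := by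
  constructor
  · calc ‖(n:ℂ) - 1/2‖ ≤ ‖(n:ℂ)‖ + ‖(1/2 : ℂ)‖ := norm_sub_le _ _
      _ ≤ (n:ℝ) + 1 := by simp; norm_num
  · calc ‖(n:ℂ) + 1/2‖ ≤ ‖(n:ℂ)‖ + ‖(1/2 : ℂ)‖ := norm_add_le _ _
      _ ≤ (n:ℝ) + 1 := by simp; norm_num

lemma alph_bound (n : ℕ) : ‖alph n‖ ≤ ((n:ℝ)+1) * Real.exp (-1) ^ n := by
  rcases Nat.eq_zero_or_pos n with rfl | hn
  · have : alph 0 = 0 := by simp [alph]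
    rw [this, norm_zero]
    positivity
  · rw [alph, if_neg (by omega)]
    rw [norm_mul, norm_mul]
    have h1 : ‖(1/2 : ℂ)‖ = 1/2 := by simp
    have h2 := (norm_coeff_n n).1
    have h3 : ‖(((Real.exp (1 - (n:ℝ)) : ℝ) : ℂ) - ((Real.exp (-(n:ℝ)) : ℝ) : ℂ))‖
        ≤ 2 * Real.exp (-(n:ℝ)) := by
      rw [← Complex.ofReal_sub, Complex.norm_real, Real.norm_eq_abs]
      rw [_root_.abs_of_nonneg (by
        apply sub_nonneg.mpr
        apply Real.exp_le_exp.mpr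
        linarith)]
      have : Real.exp (1 - (n:ℝ)) = Real.exp 1 * Real.exp (-(n:ℝ)) := by
        rw [← Real.exp_add]; ring_nf
      rw [this]
      nlinarith [Real.exp_one_lt_d9, Real.exp_pos (-(n:ℝ))]
    calc ‖(1/2:ℂ)‖ * ‖(n:ℂ) - 1/2‖ * ‖_‖ ≤ (1/2) * (((n:ℝ)+1)) * (2 * Real.exp (-(n:ℝ))) := by
          apply mul_le_mul (mul_le_mul (le_of_eq h1) h2 (norm_nonneg _) (by norm_num)) h3
            (norm_nonneg _) (by positivity)
      _ = ((n:ℝ)+1) * Real.exp (-1) ^ n := by rw [← exp_neg_nat]; ring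

lemma bet_bound (n : ℕ) : ‖bet n‖ ≤ ((n:ℝ)+1) * Real.exp (-1) ^ n := by
  rw [bet, norm_mul, norm_mul]
  have h1 : ‖(1/2 : ℂ)‖ = 1/2 := by simp
  have h2 := (norm_coeff_n n).2
  have h3 : ‖(((Real.exp (-(n:ℝ)) : ℝ) : ℂ) - ((Real.exp (-(n:ℝ) - 1) : ℝ) : ℂ))‖
      ≤ 2 * Real.exp (-(n:ℝ)) := by
    rw [← Complex.ofReal_sub, Complex.norm_real, Real.norm_eq_abs]
    rw [_root_.abs_of_nonneg (by
      apply sub_nonneg.mpr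
      apply Real.exp_le_exp.mpr
      linarith)]
    nlinarith [Real.exp_pos (-(n:ℝ)), Real.exp_pos (-(n:ℝ) - 1)]
  calc ‖(1/2:ℂ)‖ * ‖(n:ℂ) + 1/2‖ * ‖_‖ ≤ (1/2) * (((n:ℝ)+1)) * (2 * Real.exp (-(n:ℝ))) := by
        apply mul_le_mul (mul_le_mul (le_of_eq h1) h2 (norm_nonneg _) (by norm_num)) h3
          (norm_nonneg _) (by positivity)
    _ = ((n:ℝ)+1) * Real.exp (-1) ^ n := by rw [← exp_neg_nat]; ring

lemma summable_sq_of_bound {c : ℕ → ℂ}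
    (h : ∀ n, ‖c n‖ ≤ ((n:ℝ)+1) * Real.exp (-1) ^ n) :
    Summable fun n => ‖c n‖ ^ 2 := by
  set r : ℝ := Real.exp (-1) ^ 2 with hr
  have hr0 : 0 ≤ r := by positivity
  have hr1 : r < 1 := by
    have := Real.exp_lt_one_iff.mpr (by norm_num : (-1:ℝ) < 0)
    nlinarith [Real.exp_pos (-1:ℝ)]
  have hsum : Summable fun n : ℕ => ((n:ℝ)+1) ^ 2 * r ^ n := by
    have h1 : Summable fun n : ℕ => (n:ℝ) ^ 2 * r ^ n :=
      summable_pow_mul_geometric_of_norm_lt_one 2 (by rwa [Real.norm_eq_abs, _root_.abs_of_nonneg hr0])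
    have h2 : Summable fun n : ℕ => (n:ℝ) ^ 1 * r ^ n :=
      summable_pow_mul_geometric_of_norm_lt_one 1 (by rwa [Real.norm_eq_abs, _root_.abs_of_nonneg hr0])
    have h3 : Summable fun n : ℕ => r ^ n := summable_geometric_of_lt_one hr0 hr1
    have := (h1.add ((h2.mul_left 2).add h3))
    apply this.congr
    intro n
    ring
  refine Summable.of_nonneg_of_le (fun n => by positivity) (fun n => ?_) hsum
  calc ‖c n‖ ^ 2 ≤ (((n:ℝ)+1) * Real.exp (-1) ^ n) ^ 2 := by
        apply pow_le_pow_left₀ (norm_nonneg _) (h n)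
    _ = ((n:ℝ)+1) ^ 2 * r ^ n := by rw [hr]; ring

lemma alph_summable : Summable fun n => ‖alph n‖ ^ 2 := summable_sq_of_bound alph_bound
lemma bet_summable : Summable fun n => ‖bet n‖ ^ 2 := summable_sq_of_bound bet_bound


/-- **The commutator `[1/m₁^f(·), iA_{m₁^f}]`, defined on finitely supported
functions, extends to a compact operator on `ℓ²(ℕ, m₁^f)`** (transported by the
unitary `f ↦ √(m₁^f)·f` to the unweighted `ℓ²(ℕ)`). -/
theorem stmt10 :
    ∃ T : L2 ℕ →L[ℂ] L2 ℕ,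
      IsCompactOperator T ∧
      ∀ g : L2 ℕ, (Function.support (g : ℕ → ℂ)).Finite →
        ((T g : ℕ → ℂ) = emb m1F (commOp (unemb m1F g))) := by
  refine ⟨opL alph (fun n => n - 1) alph_summable + opL bet (fun n => n + 1) bet_summable,
    ?_, ?_⟩
  · have h := (opL_compact alph (fun n => n - 1) alph_summable).add
      (opL_compact bet (fun n => n + 1) bet_summable)
    have hco : ⇑(opL alph (fun n => n - 1) alph_summable
        + opL bet (fun n => n + 1) bet_summable)
        = ⇑(opL alph (fun n => n - 1) alph_summable)
          + ⇑(opL bet (fun n => n + 1) bet_summable) := rfl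
    rw [hco]
    exact h
  · intro g _
    funext n
    rw [ContinuousLinearMap.add_apply, lp.coeFn_add, Pi.add_apply, opL_apply, opL_apply]
    exact key (⇑g) n
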